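/- If a list L₁ of Booleans has configuration X ∈ C, a list L₂ of Booleans has configuration X' ∈ C, and X and X' are compatible, then the concatenation L₁ ++ L₂ is cyclically bimodal. (This is the fact, used in the paper's dynamic program over sphere-cut decompositions, that compatible configurations on the two sides of a vertex imply bimodality of that vertex.) -/

import Mathlib

/-- Edge directions at a vertex: `true` = incoming (`i`), `false` = outgoing (`o`).
The configuration set `C = {[i], [o], [i,o], [o,i], [o,i,o], [i,o,i]}`. -/
def Config : Set (List Bool) :=
  {[true], [false], [true, false], [false, true],
    [false, true, false], [true, false, true]}

/-- A list `L` has configuration `X ∈ C` if the destutter of `L` is a sublist of `X`. -/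
def HasConfig (L X : List Bool) : Prop :=
  X ∈ Config ∧ (List.destutter (· ≠ ·) L).Sublist X

/-- Configurations `X, X'` are compatible if the destutter of `X ++ X'` is a
contiguous substring (infix) of `[o,i,o]` or of `[i,o,i]`. -/
def Compatible (X X' : List Bool) : Prop :=
  (List.destutter (· ≠ ·) (X ++ X')) <:+: [false, true, false] ∨
    (List.destutter (· ≠ ·) (X ++ X')) <:+: [true, false, true]

/-- A list, viewed as a cyclic sequence, is cyclically bimodal if the destutter of
some rotation has length at most `2`. -/
def CyclicallyBimodal (L : List Bool) : Prop :=
  ∃ n : ℕ, (List.destutter (· ≠ ·) (L.rotate n)).length ≤ 2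

open List

local notation "Rne" => ((· ≠ ·) : Bool → Bool → Prop)

lemma dlen : ∀ (L : List Bool) (a : Bool),
    (L.destutter' Rne a).length
      = (L.destutter Rne).length + (if L.head? = some a then 0 else 1) := by
  intro L
  induction L with
  | nil => intro a; simp
  | cons b T ih =>
    intro a
    by_cases h : a = b
    · subst h
      rw [destutter'_cons, if_neg (by simp)]
      simp [destutter_cons']
    · rw [destutter'_cons, if_pos (by exact h)]
      have : ¬ ((b :: T).head? = some a) := by simp [Ne.symm h]
      rw [if_neg this]
      simp [destutter_cons']

lemma dhead : ∀ (L : List Bool) (a : Bool), (L.destutter' Rne a).head? = some a := by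
  intro L
  induction L with
  | nil => intro a; simp
  | cons b T ih =>
    intro a
    by_cases h : a = b
    · subst h; rw [destutter'_cons, if_neg (by simp)]; exact ih a
    · rw [destutter'_cons, if_pos (by exact h)]; simp

lemma dlast : ∀ (L : List Bool) (a : Bool),
    (L.destutter' Rne a).getLast? = some (L.getLastD a) := by
  intro L
  induction L with
  | nil => intro a; simp
  | cons b T ih =>
    intro a
    by_cases h : a = b
    · subst h; rw [destutter'_cons, if_neg (by simp)]; rw [ih a, getLastD_cons]
    · rw [destutter'_cons, if_pos (by exact h)]
      rw [getLast?_cons, ih b, getLastD_cons]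
      simp [getLastD]

lemma dappend : ∀ (A : List Bool) (B : List Bool) (a : Bool),
    ((A ++ B).destutter' Rne a).length + 1
      = (A.destutter' Rne a).length + (B.destutter' Rne (A.getLastD a)).length := by
  intro A
  induction A with
  | nil => intro B a; simp; omega
  | cons x A' ih =>
    intro B a
    by_cases h : a = x
    · subst h
      rw [cons_append, destutter'_cons, if_neg (by simp), destutter'_cons (l := A'),
        if_neg (by simp), getLastD_cons]
      exact ih B a
    · rw [cons_append, destutter'_cons, if_pos (by exact h),
        destutter'_cons (l := A'), if_pos (by exact h), getLastD_cons]
      simp only [length_cons]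
      have := ih B x
      omega

lemma dmono2 : ∀ {L M : List Bool}, L <+ M → ∀ a,
    (L.destutter' Rne a).length ≤ (M.destutter' Rne a).length := by
  intro L M h
  induction h with
  | slnil => intro a; simp
  | cons m h ih =>
    rename_i L' M'
    intro a
    by_cases hm : a = m
    · subst hm; rw [destutter'_cons, if_neg (by simp)]; exact ih a
    · rw [destutter'_cons (l := M'), if_pos (by exact hm)]
      have h1 := dlen L' a
      have h2 := dlen L' m
      have h3 := ih m
      simp only [length_cons]
      split_ifs at h1 h2 <;> omega
  | cons_cons m h ih =>
    rename_i L' M'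
    intro a
    by_cases hm : a = m
    · subst hm
      rw [destutter'_cons (l := L'), if_neg (by simp), destutter'_cons (l := M'),
        if_neg (by simp)]
      exact ih a
    · rw [destutter'_cons (l := L'), if_pos (by exact hm), destutter'_cons (l := M'),
        if_pos (by exact hm)]
      simpa using ih m

lemma dmono : ∀ {L M : List Bool}, L <+ M →
    (L.destutter Rne).length ≤ (M.destutter Rne).length := by
  intro L M h
  cases M with
  | nil => simp [sublist_nil.mp h]
  | cons m M' =>
    cases L with
    | nil => simp
    | cons l L' =>
      rw [destutter_cons', destutter_cons']
      have h2 := dmono2 h m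
      rw [destutter'_cons M' ((· ≠ ·)) (a := m) (b := m), if_neg (by simp)] at h2
      have h1 := dlen (l :: L') m
      rw [destutter_cons'] at h1
      split_ifs at h1 <;> omega

lemma drep : ∀ (p : ℕ) (a : Bool), (List.replicate p a).destutter' Rne a = [a] := by
  intro p
  induction p with
  | zero => intro a; simp
  | succ q ih =>
    intro a
    rw [replicate_succ, destutter'_cons, if_neg (by simp)]
    exact ih a

lemma firstRun : ∀ (L : List Bool) (a : Bool), ∃ p M,
    a :: L = List.replicate (p + 1) a ++ M ∧
    (a :: L).destutter Rne = a :: M.destutter Rne := by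
  intro L
  induction L with
  | nil => intro a; exact ⟨0, [], by simp, by simp⟩
  | cons b T ih =>
    intro a
    by_cases h : a = b
    · subst h
      obtain ⟨p, M, hdec, hdes⟩ := ih a
      refine ⟨p + 1, M, ?_, ?_⟩
      · rw [replicate_succ, cons_append, ← hdec]
      · rw [← hdes, destutter_cons', destutter_cons',
          destutter'_cons, if_neg (by simp)]
    · refine ⟨0, b :: T, by simp, ?_⟩
      rw [destutter_cons', destutter'_cons, if_pos (by exact h), destutter_cons']

lemma b3 (L : List Bool) (h : (L.destutter Rne).length ≤ 3) : CyclicallyBimodal L := by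
  by_cases h2 : (L.destutter Rne).length ≤ 2
  · exact ⟨0, by simpa using h2⟩
  · have h3 : (L.destutter Rne).length = 3 := by omega
    cases L with
    | nil => simp at h3
    | cons a T =>
      obtain ⟨p, M, hdec, hdes⟩ := firstRun T a
      have hM : (M.destutter Rne).length = 2 := by
        rw [hdes] at h3; simpa using h3
      cases hMd : M.destutter Rne with
      | nil => rw [hMd] at hM; simp at hM
      | cons x rest =>
        cases rest with
        | nil => rw [hMd] at hM; simp at hM
        | cons y rest2 =>
          have hrest2 : rest2 = [] := by
            rw [hMd] at hM; simpa using hM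
          subst hrest2
          have hch := isChain_destutter ((· ≠ ·) : Bool → Bool → Prop) (a :: T)
          rw [hdes, hMd] at hch
          have hax : a ≠ x := (isChain_cons_cons.mp hch).1
          have hxy : x ≠ y := (isChain_cons_cons.mp (isChain_cons_cons.mp hch).2).1
          have hya : y = a := by
            revert hax hxy; cases a <;> cases x <;> cases y <;> decide
          cases M with
          | nil => simp at hMd
          | cons m M' =>
            have hgl := dlast M' m
            rw [← destutter_cons', hMd] at hgl
            have hgl2 : M'.getLastD m = a := by
              have : ([x, y] : List Bool).getLast? = some y := by simp
              rw [this] at hgl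
              exact ((Option.some.inj hgl).symm).trans hya
            refine ⟨p + 1, ?_⟩
            have hrot : (a :: T).rotate (p + 1)
                = (m :: M') ++ List.replicate (p + 1) a := by
              rw [hdec]
              have := rotate_append_length_eq (List.replicate (p + 1) a) (m :: M')
              rwa [length_replicate] at this
            rw [hrot, cons_append, destutter_cons']
            have e := dappend M' (List.replicate (p + 1) a) m
            rw [hgl2, drep] at e
            have e2 : (M'.destutter' Rne m).length = 2 := by
              rw [← destutter_cons', hMd]; rfl
            simp only [length_cons, length_nil] at e
            omega

theorem compatible_configs_imply_bimodal (L₁ L₂ X X' : List Bool)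
    (h₁ : HasConfig L₁ X) (h₂ : HasConfig L₂ X') (hc : Compatible X X') :
    CyclicallyBimodal (L₁ ++ L₂) := by
  obtain ⟨hX, hs1⟩ := h₁
  obtain ⟨hX', hs2⟩ := h₂
  simp only [Config, Set.mem_insert_iff, Set.mem_singleton_iff] at hX hX'
  have hXd : X.destutter Rne = X := by
    rcases hX with h|h|h|h|h|h <;> subst h <;> decide
  have hX'd : X'.destutter Rne = X' := by
    rcases hX' with h|h|h|h|h|h <;> subst h <;> decide
  have hXlen : X.length ≤ 3 := by
    rcases hX with h|h|h|h|h|h <;> subst h <;> decide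
  have hX'len : X'.length ≤ 3 := by
    rcases hX' with h|h|h|h|h|h <;> subst h <;> decide
  have hXne : X ≠ [] := by
    rcases hX with h|h|h|h|h|h <;> subst h <;> decide
  have hX'ne : X' ≠ [] := by
    rcases hX' with h|h|h|h|h|h <;> subst h <;> decide
  have hinf : ((X ++ X').destutter Rne).length ≤ 3 := by
    rcases hc with h | h
    · simpa using h.sublist.length_le
    · simpa using h.sublist.length_le
  apply b3
  cases L₁ with
  | nil =>
    simp only [nil_append]
    exact le_trans hs2.length_le hX'len
  | cons a T₁ =>
    cases L₂ with
    | nil =>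
      simp only [append_nil]
      exact le_trans hs1.length_le hXlen
    | cons b T₂ =>
      cases X with
      | nil => exact absurd rfl hXne
      | cons x Tx =>
        cases X' with
        | nil => exact absurd rfl hX'ne
        | cons x' Tx' =>
          rw [cons_append, destutter_cons']
          rw [cons_append, destutter_cons'] at hinf
          have e1 := dappend T₁ (b :: T₂) a
          have e2 := dlen (b :: T₂) (T₁.getLastD a)
          have e3 := dappend Tx (x' :: Tx') x
          have e4 := dlen (x' :: Tx') (Tx.getLastD x)
          have c1 : (T₁.destutter' Rne a).length = ((a :: T₁).destutter Rne).length := by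
            rw [destutter_cons']
          have c2 : (T₂.destutter' Rne b).length = ((b :: T₂).destutter Rne).length := by
            rw [destutter_cons']
          have c3 : (Tx.destutter' Rne x).length = (x :: Tx).length := by
            rw [← destutter_cons', hXd]
          have c4 : ((x' :: Tx').destutter Rne).length = (x' :: Tx').length := by
            rw [hX'd]
          simp only [head?_cons, Option.some.injEq] at e2 e4
          by_cases heq : ((a :: T₁).destutter Rne).length = (x :: Tx).length
              ∧ ((b :: T₂).destutter Rne).length = (x' :: Tx').length
          · obtain ⟨q1, q2⟩ := heq
            have hd1 : (a :: T₁).destutter Rne = x :: Tx := hs1.eq_of_length q1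
            have hd2 : (b :: T₂).destutter Rne = x' :: Tx' := hs2.eq_of_length q2
            have hb : x' = b := by
              have h := dhead T₂ b
              rw [← destutter_cons', hd2] at h
              simpa using h
            have hg : T₁.getLastD a = Tx.getLastD x := by
              have hA := dlast T₁ a
              rw [← destutter_cons', hd1] at hA
              have hB := dlast Tx x
              rw [← destutter_cons', hXd] at hB
              rw [hA] at hB
              exact Option.some.inj hB
            have hcond : (b = T₁.getLastD a) ↔ (x' = Tx.getLastD x) := by
              rw [hb, hg]
            simp only [hcond] at e2
            split_ifs at e2 e4 <;> omega
          · have hl1 : ((a :: T₁).destutter Rne).length ≤ (x :: Tx).length :=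
              hs1.length_le
            have hl2 : ((b :: T₂).destutter Rne).length ≤ (x' :: Tx').length :=
              hs2.length_le
            rcases not_and_or.mp heq with hne | hne <;>
              split_ifs at e2 e4 <;> omega
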